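/- Let n ≥ 1 be an integer and let V_n', V_n'', V_n''' denote the first, second and third derivatives of V_n. Define 𝒱_n(x) = 3·V_n''(x)·( (V_n'(x))² − 2(V_n(x) − V_n(0))·V_n''(x) ) + 2(V_n(x) − V_n(0))·V_n'(x)·V_n'''(x). Then 𝒱_n(x) ≥ 0 for all real x with −1/2 < x < 1/2, and 𝒱_n(x) > 0 whenever in addition x ≠ 0. -/

import Mathlib

open Finset

/-- The φ^{4n} potential `V_n(x) = ∏_{k=1}^n (x² − (k−1/2)²)²`. -/
noncomputable def Vn (n : ℕ) : ℝ → ℝ :=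
  fun x => ∏ k ∈ Finset.Icc 1 n, (x ^ 2 - ((k : ℝ) - 1 / 2) ^ 2) ^ 2

/-- `𝒱_n(x) = 3 V_n''(x) ((V_n'(x))² − 2(V_n(x) − V_n(0)) V_n''(x))
      + 2 (V_n(x) − V_n(0)) V_n'(x) V_n'''(x)`. -/
noncomputable def calV (n : ℕ) (x : ℝ) : ℝ :=
  3 * deriv (deriv (Vn n)) x *
      ((deriv (Vn n) x) ^ 2 - 2 * (Vn n x - Vn n 0) * deriv (deriv (Vn n)) x)
    + 2 * (Vn n x - Vn n 0) * deriv (Vn n) x * deriv (deriv (deriv (Vn n))) x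

namespace Stmt5Aux

/-- interval -/
def II : Set ℝ := Set.Ioo (-(1/2)) (1/2)

noncomputable def bb (k : ℕ) : ℝ := ((k : ℝ) - 1/2)^2
noncomputable def tt (k : ℕ) (x : ℝ) : ℝ := (bb k - x^2)⁻¹
noncomputable def ee (k : ℕ) (x : ℝ) : ℝ := 1 - x^2 / bb k
noncomputable def pp (n : ℕ) (x : ℝ) : ℝ := ∏ k ∈ Icc 1 n, ee k x
noncomputable def s1 (n : ℕ) (x : ℝ) : ℝ := ∑ k ∈ Icc 1 n, tt k x
noncomputable def s2 (n : ℕ) (x : ℝ) : ℝ := ∑ k ∈ Icc 1 n, (tt k x)^2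
noncomputable def s3 (n : ℕ) (x : ℝ) : ℝ := ∑ k ∈ Icc 1 n, (tt k x)^3
noncomputable def cc (n : ℕ) : ℝ := ∏ k ∈ Icc 1 n, (bb k)^2

lemma quarter_le_bb (k : ℕ) : 1/4 ≤ bb k := by
  unfold bb
  rcases k with _ | m
  · norm_num
  · have h1 : (1:ℝ) ≤ ((m+1 : ℕ) : ℝ) := by exact_mod_cast Nat.succ_le_succ (Nat.zero_le m)
    nlinarith

lemma bb_pos (k : ℕ) : 0 < bb k := lt_of_lt_of_le (by norm_num) (quarter_le_bb k)

lemma sq_lt_quarter {x : ℝ} (hx : x ∈ II) : x^2 < 1/4 := by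
  obtain ⟨h1, h2⟩ := hx
  nlinarith

lemma bb_sub_pos {x : ℝ} (hx : x ∈ II) (k : ℕ) : 0 < bb k - x^2 :=
  by have := sq_lt_quarter hx; have := quarter_le_bb k; linarith

lemma tt_pos {x : ℝ} (hx : x ∈ II) (k : ℕ) : 0 < tt k x :=
  inv_pos.mpr (bb_sub_pos hx k)

lemma ee_eq (k : ℕ) (x : ℝ) : ee k x = (bb k - x^2) / bb k := by
  have h := ne_of_gt (bb_pos k)
  unfold ee
  field_simp

lemma ee_pos {x : ℝ} (hx : x ∈ II) (k : ℕ) : 0 < ee k x := by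
  rw [ee_eq]; exact div_pos (bb_sub_pos hx k) (bb_pos k)

lemma pp_pos {x : ℝ} (hx : x ∈ II) (n : ℕ) : 0 < pp n x :=
  Finset.prod_pos fun k _ => ee_pos hx k

lemma cc_pos (n : ℕ) : 0 < cc n := Finset.prod_pos fun k _ => pow_pos (bb_pos k) 2

lemma s1_pos {x : ℝ} (hx : x ∈ II) {n : ℕ} (hn : 1 ≤ n) : 0 < s1 n x :=
  Finset.sum_pos (fun k _ => tt_pos hx k) ⟨1, by simp [hn]⟩

lemma bb_mul_tt {x : ℝ} (hx : x ∈ II) (k : ℕ) : bb k * tt k x = (ee k x)⁻¹ := by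
  rw [ee_eq]
  unfold tt
  rw [inv_div]
  rw [div_eq_mul_inv, mul_comm]

lemma hasDerivAt_tt {x : ℝ} (hx : x ∈ II) (k : ℕ) :
    HasDerivAt (tt k) (2*x*(tt k x)^2) x := by
  have h : HasDerivAt (fun y : ℝ => bb k - y^2) (-(2*x)) x := by
    simpa using ((hasDerivAt_pow 2 x).const_sub (bb k))
  have := h.fun_inv (ne_of_gt (bb_sub_pos hx k))
  convert! this using 1
  unfold tt
  field_simp

lemma hasDerivAt_s1 {x : ℝ} (hx : x ∈ II) (n : ℕ) :
    HasDerivAt (s1 n) (2*x*s2 n x) x := by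
  have h : HasDerivAt (fun y => ∑ k ∈ Icc 1 n, tt k y) (∑ k ∈ Icc 1 n, 2*x*(tt k x)^2) x :=
    HasDerivAt.fun_sum (fun k _ => hasDerivAt_tt hx k)
  convert! h using 1
  unfold s2
  rw [Finset.mul_sum]

lemma hasDerivAt_s2 {x : ℝ} (hx : x ∈ II) (n : ℕ) :
    HasDerivAt (s2 n) (4*x*s3 n x) x := by
  have h : HasDerivAt (fun y => ∑ k ∈ Icc 1 n, (tt k y)^2)
      (∑ k ∈ Icc 1 n, 4*x*(tt k x)^3) x := by
    refine HasDerivAt.fun_sum (fun k _ => ?_)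
    have := ((hasDerivAt_tt hx k).fun_pow 2)
    convert! this using 1
    ring
  convert! h using 1
  unfold s3
  rw [Finset.mul_sum]

lemma hasDerivAt_pp {x : ℝ} (hx : x ∈ II) (n : ℕ) :
    HasDerivAt (pp n) (-2*x*pp n x*s1 n x) x := by
  have h : ∀ k ∈ Icc 1 n, HasDerivAt (fun y => ee k y) (-2*x/bb k) x := by
    intro k _
    have h2 : HasDerivAt (fun y : ℝ => 1 - y^2/bb k) (-(2*x/bb k)) x := by
      simpa using (((hasDerivAt_pow 2 x).div_const (bb k)).const_sub 1)
    convert! h2 using 1; ring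
  have hprod := HasDerivAt.fun_finsetProd h
  convert! hprod using 1
  unfold s1
  rw [Finset.mul_sum]
  refine Finset.sum_congr rfl (fun k hk => ?_)
  have herase : (∏ j ∈ (Icc 1 n).erase k, ee j x) = pp n x * (bb k * tt k x) := by
    rw [bb_mul_tt hx]
    have h2 : (∏ j ∈ (Icc 1 n).erase k, ee j x) * ee k x = pp n x :=
      Finset.prod_erase_mul (Icc 1 n) (fun j => ee j x) hk
    have h3 := ne_of_gt (ee_pos hx k)
    field_simp
    linarith [h2]
  rw [herase]
  have hbk := ne_of_gt (bb_pos k)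
  have hbs := ne_of_gt (bb_sub_pos hx k)
  simp only [smul_eq_mul]
  unfold tt
  field_simp


/-! ### telescoping and product splitting -/

lemma telescope (n : ℕ) (x : ℝ) :
    x^2 * ∑ k ∈ Icc 1 n, (bb k)⁻¹ * ∏ l ∈ Ico 1 k, ee l x = 1 - pp n x := by
  induction n with
  | zero => simp [pp]
  | succ m ih =>
    rw [Finset.sum_Icc_succ_top (Nat.succ_le_succ (Nat.zero_le m))]
    have hpp : pp (m+1) x = pp m x * ee (m+1) x := by
      unfold pp
      rw [Finset.prod_Icc_succ_top (Nat.succ_le_succ (Nat.zero_le m))]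
    have hico : Ico 1 (m+1) = Icc 1 m := Finset.Ico_add_one_right_eq_Icc 1 m
    rw [mul_add, ih, hpp, hico]
    have : (∏ l ∈ Icc 1 m, ee l x) = pp m x := rfl
    rw [this]
    have hb := ne_of_gt (bb_pos (m+1))
    unfold ee
    field_simp
    ring

lemma pp_split {k n : ℕ} (hk : k ∈ Icc 1 n) (x : ℝ) :
    pp n x = (∏ l ∈ Ico 1 k, ee l x) * ∏ l ∈ Icc k n, ee l x := by
  simp only [Finset.mem_Icc] at hk
  unfold pp
  rw [← Finset.Ico_add_one_right_eq_Icc, ← Finset.prod_Ico_consecutive _ hk.1 (by omega : k ≤ n + 1),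
    Finset.Ico_add_one_right_eq_Icc]

/-! ### the Good class -/

def DGood (f h f₂ : ℝ → ℝ) : Prop :=
  (∀ x ∈ II, HasDerivAt f (x * h x) x) ∧
  (∀ x ∈ II, HasDerivAt (fun y => y * h y) (f₂ x) x) ∧
  (∀ x ∈ II, 0 < f x) ∧ (∀ x ∈ II, 0 ≤ h x) ∧ (∀ x ∈ II, 0 ≤ f₂ x)

def Good (f : ℝ → ℝ) : Prop := ∃ h f₂, DGood f h f₂

def GoodP (f : ℝ → ℝ) : Prop := ∃ h f₂, DGood f h f₂ ∧ ∀ x ∈ II, 0 < f₂ x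

lemma GoodP.toGood {f : ℝ → ℝ} (hf : GoodP f) : Good f := by
  obtain ⟨h, f₂, hd, _⟩ := hf; exact ⟨h, f₂, hd⟩

lemma good_const {c : ℝ} (hc : 0 < c) : Good (fun _ => c) := by
  refine ⟨fun _ => 0, fun _ => 0, fun x _ => ?_, fun x _ => ?_, fun x _ => hc,
    fun x _ => le_refl 0, fun x _ => le_refl 0⟩
  · simpa using hasDerivAt_const x c
  · simpa using (hasDerivAt_id x).mul_const (0:ℝ)

lemma DGood.mul {f hf f₂ g hg g₂ : ℝ → ℝ} (Hf : DGood f hf f₂) (Hg : DGood g hg g₂) :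
    DGood (fun x => f x * g x) (fun x => hf x * g x + f x * hg x)
      (fun x => f₂ x * g x + 2*x^2*(hf x * hg x) + f x * g₂ x) := by
  obtain ⟨f1, f2', fpos, hfn, f2n⟩ := Hf
  obtain ⟨g1, g2', gpos, hgn, g2n⟩ := Hg
  refine ⟨fun x hx => ?_, fun x hx => ?_, fun x hx => mul_pos (fpos x hx) (gpos x hx),
    fun x hx => ?_, fun x hx => ?_⟩
  · have := (f1 x hx).fun_mul (g1 x hx)
    convert! this using 1
    ring
  · have h1 : HasDerivAt (fun y => (y * hf y) * g y)
        (f₂ x * g x + (x * hf x) * (x * hg x)) x := by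
      have := (f2' x hx).fun_mul (g1 x hx)
      convert this using 1 <;> ring
    have h2 : HasDerivAt (fun y => f y * (y * hg y))
        ((x * hf x) * (x * hg x) + f x * g₂ x) x := by
      have := (f1 x hx).fun_mul (g2' x hx)
      convert this using 1 <;> ring
    have h3 := h1.fun_add h2
    have heq : (fun y => (y * hf y) * g y + f y * (y * hg y))
        = (fun y => y * (hf y * g y + f y * hg y)) := by
      funext y; ring
    rw [heq] at h3
    convert! h3 using 1
    ring
  · have := fpos x hx; have := gpos x hx; have := hfn x hx; have := hgn x hx
    positivity
  · have h1 := f2n x hx; have h2 := g2n x hx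
    have h3 := fpos x hx; have h4 := gpos x hx
    have h5 := hfn x hx; have h6 := hgn x hx
    show 0 ≤ f₂ x * g x + 2*x^2*(hf x * hg x) + f x * g₂ x
    have hA : 0 ≤ f₂ x * g x := mul_nonneg h1 h4.le
    have hB : 0 ≤ f x * g₂ x := mul_nonneg h3.le h2
    have hC : 0 ≤ 2*x^2*(hf x * hg x) := by positivity
    linarith

lemma Good.mul {f g : ℝ → ℝ} (Hf : Good f) (Hg : Good g) : Good (fun x => f x * g x) := by
  obtain ⟨hf, f₂, Hf⟩ := Hf; obtain ⟨hg, g₂, Hg⟩ := Hg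
  exact ⟨_, _, Hf.mul Hg⟩

lemma Good.mulP {f g : ℝ → ℝ} (Hf : Good f) (Hg : GoodP g) : GoodP (fun x => f x * g x) := by
  obtain ⟨hf, f₂, Hf⟩ := Hf; obtain ⟨hg, g₂, Hg, hgP⟩ := Hg
  refine ⟨_, _, Hf.mul Hg, fun x hx => ?_⟩
  obtain ⟨f1, f2', fpos, hfn, f2n⟩ := Hf
  obtain ⟨g1, g2', gpos, hgn, g2n⟩ := Hg
  have h1 := f2n x hx; have h2 := hgP x hx
  have h3 := fpos x hx; have h4 := gpos x hx
  have h5 := hfn x hx; have h6 := hgn x hx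
  have h7 : 0 ≤ 2*x^2*(hf x * hg x) := by positivity
  show 0 < f₂ x * g x + 2*x^2*(hf x * hg x) + f x * g₂ x
  have hA : 0 ≤ f₂ x * g x := mul_nonneg h1 h4.le
  have hB : 0 < f x * g₂ x := mul_pos h3 h2
  linarith

lemma DGood.add {f hf f₂ g hg g₂ : ℝ → ℝ} (Hf : DGood f hf f₂) (Hg : DGood g hg g₂) :
    DGood (fun x => f x + g x) (fun x => hf x + hg x) (fun x => f₂ x + g₂ x) := by
  obtain ⟨f1, f2', fpos, hfn, f2n⟩ := Hf
  obtain ⟨g1, g2', gpos, hgn, g2n⟩ := Hg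
  refine ⟨fun x hx => ?_, fun x hx => ?_,
    fun x hx => add_pos (fpos x hx) (gpos x hx),
    fun x hx => add_nonneg (hfn x hx) (hgn x hx),
    fun x hx => add_nonneg (f2n x hx) (g2n x hx)⟩
  · have := (f1 x hx).fun_add (g1 x hx)
    convert! this using 1; ring
  · have h3 := (f2' x hx).fun_add (g2' x hx)
    have heq : (fun y => y * hf y + y * hg y) = (fun y => y * (hf y + hg y)) := by
      funext y; ring
    rw [heq] at h3
    exact h3

lemma Good.add {f g : ℝ → ℝ} (Hf : Good f) (Hg : Good g) : Good (fun x => f x + g x) := by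
  obtain ⟨hf, f₂, Hf⟩ := Hf; obtain ⟨hg, g₂, Hg⟩ := Hg
  exact ⟨_, _, Hf.add Hg⟩

lemma GoodP.add {f g : ℝ → ℝ} (Hf : GoodP f) (Hg : GoodP g) : GoodP (fun x => f x + g x) := by
  obtain ⟨hf, f₂, Hf, hfP⟩ := Hf; obtain ⟨hg, g₂, Hg, hgP⟩ := Hg
  exact ⟨_, _, Hf.add Hg, fun x hx => add_pos (hfP x hx) (hgP x hx)⟩

lemma Good.prod {ι : Type*} [DecidableEq ι] {S : Finset ι} {F : ι → ℝ → ℝ}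
    (h : ∀ k ∈ S, Good (F k)) : Good (fun x => ∏ k ∈ S, F k x) := by
  classical
  induction S using Finset.induction_on with
  | empty => simpa using good_const (c := 1) one_pos
  | @insert a s hnot ih =>
    have ha := h a (Finset.mem_insert_self a s)
    have hs := ih (fun k hk => h k (Finset.mem_insert_of_mem hk))
    have := ha.mul hs
    simp only [Finset.prod_insert hnot]
    exact this

lemma GoodP.sum {ι : Type*} {S : Finset ι} (hS : S.Nonempty) {F : ι → ℝ → ℝ}
    (h : ∀ k ∈ S, GoodP (F k)) : GoodP (fun x => ∑ k ∈ S, F k x) := by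
  classical
  induction hS using Finset.Nonempty.cons_induction with
  | singleton a => simpa using h a (Finset.mem_singleton_self a)
  | cons a s ha hs ih =>
    have h1 := h a (Finset.mem_cons_self a s)
    have h2 := ih (fun k hk => h k (Finset.mem_cons_of_mem hk))
    have := h1.add h2
    simp only [Finset.sum_cons]
    exact this



/-! ### atoms -/

lemma good_atom (k : ℕ) : GoodP (fun x => bb k * tt k x) := by
  refine ⟨fun x => 2*bb k*(tt k x)^2,
    fun x => 2*bb k*(tt k x)^2 + 8*bb k*x^2*(tt k x)^3,
    ⟨fun x hx => ?_, fun x hx => ?_, fun x hx => mul_pos (bb_pos k) (tt_pos hx k),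
      fun x hx => ?_, fun x hx => ?_⟩, fun x hx => ?_⟩
  · have := (hasDerivAt_tt hx k).const_mul (bb k)
    convert! this using 1
    ring
  · have hh : HasDerivAt (fun y => 2*bb k*(tt k y)^2) (2*bb k*(2*(tt k x)*(2*x*(tt k x)^2))) x := by
      have := ((hasDerivAt_tt hx k).fun_pow 2).const_mul (2*bb k)
      convert! this using 1
      push_cast
      ring
    have := (hasDerivAt_id x).fun_mul hh
    convert! this using 1
    simp only [id_eq]
    ring
  · have := tt_pos hx k; have := bb_pos k; positivity
  · have := tt_pos hx k; have := bb_pos k; positivity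
  · have h1 := tt_pos hx k; have h2 := bb_pos k
    show (0:ℝ) < 2*bb k*(tt k x)^2 + 8*bb k*x^2*(tt k x)^3
    have h3 : (0:ℝ) < 2*bb k*(tt k x)^2 := by positivity
    have h4 : (0:ℝ) ≤ 8*bb k*x^2*(tt k x)^3 := by positivity
    linarith

/-- the symmetric power-sum inequality: `s1⁴ - s1²s2 - 2 s1 s3 + 2 s2² ≥ 0` -/
lemma s2_le_s1_sq {x : ℝ} (hx : x ∈ II) (n : ℕ) : s2 n x ≤ (s1 n x)^2 := by
  have htp : ∀ k ∈ Icc 1 n, 0 ≤ tt k x := fun k _ => (tt_pos hx k).le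
  have hps : s1 n x = ∑ k ∈ Icc 1 n, tt k x := rfl
  have h1 : (s1 n x)^2 = ∑ k ∈ Icc 1 n, tt k x * s1 n x := by
    conv_lhs => rw [hps]
    rw [← Finset.sum_mul, ← hps]
    ring
  have hqs : s2 n x = ∑ k ∈ Icc 1 n, (tt k x)^2 := rfl
  rw [hqs, h1]
  refine Finset.sum_le_sum (fun k hk => ?_)
  have h2 : tt k x ≤ s1 n x := by rw [hps]; exact Finset.single_le_sum htp hk
  have h3 := (tt_pos hx k).le
  nlinarith

lemma fsym_nonneg {x : ℝ} (hx : x ∈ II) (n : ℕ) :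
    0 ≤ (s1 n x)^4 - (s1 n x)^2 * s2 n x - 2 * s1 n x * s3 n x + 2 * (s2 n x)^2 := by
  have htp : ∀ k ∈ Icc 1 n, 0 ≤ tt k x := fun k _ => (tt_pos hx k).le
  have hps : s1 n x = ∑ k ∈ Icc 1 n, tt k x := rfl
  have hqs : s2 n x = ∑ k ∈ Icc 1 n, (tt k x)^2 := rfl
  have hrs : s3 n x = ∑ k ∈ Icc 1 n, (tt k x)^3 := rfl
  have hp0 : 0 ≤ s1 n x := by rw [hps]; exact Finset.sum_nonneg htp
  have hq0 : 0 ≤ s2 n x := by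
    rw [hqs]; exact Finset.sum_nonneg (fun k _ => sq_nonneg _)
  have hqp : s2 n x ≤ (s1 n x)^2 := s2_le_s1_sq hx n
  have hrq : s3 n x ≤ s2 n x * Real.sqrt (s2 n x) := by
    have h1 : s2 n x * Real.sqrt (s2 n x)
        = ∑ k ∈ Icc 1 n, (tt k x)^2 * Real.sqrt (s2 n x) := by
      rw [← Finset.sum_mul, ← hqs]
    rw [hrs, h1]
    refine Finset.sum_le_sum (fun k hk => ?_)
    have h2 : (tt k x)^2 ≤ s2 n x := by
      rw [hqs]
      exact Finset.single_le_sum (fun j (_ : j ∈ Icc 1 n) => sq_nonneg (tt j x)) hk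
    have h3 : tt k x ≤ Real.sqrt (s2 n x) := by
      calc tt k x = Real.sqrt ((tt k x)^2) := (Real.sqrt_sq (tt_pos hx k).le).symm
        _ ≤ Real.sqrt (s2 n x) := Real.sqrt_le_sqrt h2
    have h4 := (tt_pos hx k).le
    have h5 := Real.sqrt_nonneg (s2 n x)
    nlinarith
  have hsq : (Real.sqrt (s2 n x))^2 = s2 n x := Real.sq_sqrt hq0
  have hs0 : 0 ≤ Real.sqrt (s2 n x) := Real.sqrt_nonneg (s2 n x)
  nlinarith [sq_nonneg ((s1 n x)^2 - s2 n x),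
    sq_nonneg (s1 n x * Real.sqrt (s2 n x) - s2 n x),
    mul_le_mul_of_nonneg_left hrq hp0]

lemma good_rho {n : ℕ} (hn : 1 ≤ n) : Good (fun x => (pp n x * s1 n x)⁻¹) := by
  refine ⟨fun x => 2*((s1 n x)^2 - s2 n x) * (pp n x * (s1 n x)^2)⁻¹,
    fun x => 2*((s1 n x)^2 - s2 n x) * (pp n x * (s1 n x)^2)⁻¹
      + x * (4*x*((s1 n x)^4 - (s1 n x)^2 * s2 n x - 2 * s1 n x * s3 n x + 2 * (s2 n x)^2)
          * (pp n x * (s1 n x)^3)⁻¹),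
    fun x hx => ?_, fun x hx => ?_, fun x hx => ?_, fun x hx => ?_, fun x hx => ?_⟩
  case _ => -- first derivative
    have hppx := pp_pos hx n
    have hs1x := s1_pos hx hn
    have hw : HasDerivAt (fun y => pp n y * s1 n y)
        ((-2*x*pp n x*s1 n x) * s1 n x + pp n x * (2*x*s2 n x)) x :=
      (hasDerivAt_pp hx n).mul (hasDerivAt_s1 hx n)
    have hne : pp n x * s1 n x ≠ 0 := by positivity
    have := hw.fun_inv hne
    convert! this using 1
    field_simp
    ring
  case _ => -- second derivative
    have hppx := pp_pos hx n
    have hs1x := s1_pos hx hn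
    have hne : pp n x * s1 n x ≠ 0 := by positivity
    have hne2 : pp n x * (s1 n x)^2 ≠ 0 := by positivity
    -- derivative of h
    have hu : HasDerivAt (fun y => 2*((s1 n y)^2 - s2 n y))
        (2*((2 * s1 n x)*(2*x*s2 n x) - 4*x*s3 n x)) x := by
      have h1 := ((hasDerivAt_s1 hx n).fun_pow 2).fun_sub (hasDerivAt_s2 hx n)
      have h2 := h1.const_mul (2:ℝ)
      convert! h2 using 1
      ring
    have hw : HasDerivAt (fun y => pp n y * (s1 n y)^2)
        ((-2*x*pp n x*s1 n x) * (s1 n x)^2 + pp n x * ((2*s1 n x) * (2*x*s2 n x))) x := by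
      have := (hasDerivAt_pp hx n).fun_mul ((hasDerivAt_s1 hx n).fun_pow 2)
      convert! this using 1
      ring
    have hh : HasDerivAt (fun y => 2*((s1 n y)^2 - s2 n y) * (pp n y * (s1 n y)^2)⁻¹)
        (4*x*((s1 n x)^4 - (s1 n x)^2 * s2 n x - 2 * s1 n x * s3 n x + 2 * (s2 n x)^2)
          * (pp n x * (s1 n x)^3)⁻¹) x := by
      have := hu.fun_mul (hw.fun_inv hne2)
      convert! this using 1
      field_simp
      ring
    have := (hasDerivAt_id x).fun_mul hh
    convert! this using 1
    simp only [id_eq]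
    ring
  case _ => -- positivity of f
    have hppx := pp_pos hx n
    have hs1x := s1_pos hx hn
    positivity
  case _ => -- h nonneg
    have hppx := pp_pos hx n
    have hs1x := s1_pos hx hn
    have hqp : s2 n x ≤ (s1 n x)^2 := s2_le_s1_sq hx n
    have h4 : (0:ℝ) < (pp n x * (s1 n x)^2)⁻¹ := by positivity
    have h5 : 0 ≤ 2*((s1 n x)^2 - s2 n x) := by linarith
    positivity
  case _ => -- f₂ nonneg
    have hppx := pp_pos hx n
    have hs1x := s1_pos hx hn
    have hqp : s2 n x ≤ (s1 n x)^2 := s2_le_s1_sq hx n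
    have hf := fsym_nonneg hx n
    have h4 : (0:ℝ) < (pp n x * (s1 n x)^2)⁻¹ := by positivity
    have h5 : (0:ℝ) < (pp n x * (s1 n x)^3)⁻¹ := by positivity
    have h6 : 0 ≤ 2*((s1 n x)^2 - s2 n x) * (pp n x * (s1 n x)^2)⁻¹ := by
      have : 0 ≤ 2*((s1 n x)^2 - s2 n x) := by linarith
      positivity
    have h7 : 0 ≤ x * (4*x*((s1 n x)^4 - (s1 n x)^2 * s2 n x - 2 * s1 n x * s3 n x
        + 2 * (s2 n x)^2) * (pp n x * (s1 n x)^3)⁻¹) := by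
      have h8 : x * (4*x*((s1 n x)^4 - (s1 n x)^2 * s2 n x - 2 * s1 n x * s3 n x
          + 2 * (s2 n x)^2) * (pp n x * (s1 n x)^3)⁻¹)
          = 4*x^2*(((s1 n x)^4 - (s1 n x)^2 * s2 n x - 2 * s1 n x * s3 n x
          + 2 * (s2 n x)^2) * (pp n x * (s1 n x)^3)⁻¹) := by ring
      rw [h8]
      have h9 : 0 ≤ ((s1 n x)^4 - (s1 n x)^2 * s2 n x - 2 * s1 n x * s3 n x
          + 2 * (s2 n x)^2) * (pp n x * (s1 n x)^3)⁻¹ := mul_nonneg hf h5.le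
      positivity
    linarith

/-! ### the function N and the identity V − V(0) = −N·(V')² -/

noncomputable def BBf (n : ℕ) (x : ℝ) : ℝ := 1 + ∏ l ∈ Icc 1 n, bb l * tt l x

noncomputable def NN (n : ℕ) (x : ℝ) : ℝ :=
  ∑ k ∈ Icc 1 n, (16 * cc n * bb k)⁻¹ *
    (((BBf n x * ((pp n x * s1 n x)⁻¹ * (pp n x * s1 n x)⁻¹)) *
        ∏ l ∈ Ico k n, bb l * tt l x) * (bb n * tt n x))

noncomputable def vv1 (n : ℕ) (x : ℝ) : ℝ := (-4*cc n) * (x * ((pp n x)^2 * s1 n x))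

lemma good_BBf (n : ℕ) : Good (BBf n) := by
  have h1 : Good (fun _ : ℝ => (1:ℝ)) := good_const one_pos
  have h2 : Good (fun x => ∏ l ∈ Icc 1 n, bb l * tt l x) :=
    Good.prod (fun l _ => (good_atom l).toGood)
  exact h1.add h2

lemma goodP_NN {n : ℕ} (hn : 1 ≤ n) : GoodP (NN n) := by
  have hne : (Icc 1 n).Nonempty := ⟨1, by simp [hn]⟩
  refine GoodP.sum hne (fun k hk => ?_)
  have hc : (0:ℝ) < (16 * cc n * bb k)⁻¹ := by
    have := cc_pos n; have := bb_pos k; positivity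
  have hrho := good_rho hn
  have hG : Good (fun x => (BBf n x * ((pp n x * s1 n x)⁻¹ * (pp n x * s1 n x)⁻¹))) :=
    (good_BBf n).mul (hrho.mul hrho)
  have hprodIco : Good (fun x => ∏ l ∈ Ico k n, bb l * tt l x) :=
    Good.prod (fun l _ => (good_atom l).toGood)
  have hbig : GoodP (fun x =>
      ((BBf n x * ((pp n x * s1 n x)⁻¹ * (pp n x * s1 n x)⁻¹)) *
        ∏ l ∈ Ico k n, bb l * tt l x) * (bb n * tt n x)) :=
    (hG.mul hprodIco).mulP (good_atom n)
  exact (good_const hc).mulP hbig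

lemma VnEq (n : ℕ) (x : ℝ) : Vn n x = cc n * (pp n x)^2 := by
  unfold Vn cc pp
  rw [← Finset.prod_pow, ← Finset.prod_mul_distrib]
  refine Finset.prod_congr rfl (fun k _ => ?_)
  have h1 : bb k * ee k x = bb k - x^2 := by
    have hb := ne_of_gt (bb_pos k)
    unfold ee
    field_simp
  calc (x^2 - ((k:ℝ)-1/2)^2)^2 = (bb k - x^2)^2 := by unfold bb; ring
    _ = (bb k * ee k x)^2 := by rw [h1]
    _ = bb k^2 * (ee k x)^2 := by ring

lemma Vn0 (n : ℕ) : Vn n 0 = cc n := by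
  rw [VnEq]
  have : pp n 0 = 1 := by
    unfold pp ee
    simp
  rw [this]
  ring

lemma E1 {n : ℕ} (hn : 1 ≤ n) {x : ℝ} (hx : x ∈ II) :
    Vn n x = cc n - NN n x * (vv1 n x)^2 := by
  have hppx := ne_of_gt (pp_pos hx n)
  have hs1x := ne_of_gt (s1_pos hx hn)
  have hccx := ne_of_gt (cc_pos n)
  -- key : NN x * vv1 x ^2 = cc * (1 - pp^2)
  have hkey : NN n x * (vv1 n x)^2 = cc n * (1 - (pp n x)^2) := by
    unfold NN
    rw [Finset.sum_mul]
    have hterm : ∀ k ∈ Icc 1 n,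
        ((16 * cc n * bb k)⁻¹ *
          (((BBf n x * ((pp n x * s1 n x)⁻¹ * (pp n x * s1 n x)⁻¹)) *
            ∏ l ∈ Ico k n, bb l * tt l x) * (bb n * tt n x))) * (vv1 n x)^2
        = cc n * ((1 + pp n x) * ((bb k)⁻¹ * (x^2 * ∏ l ∈ Ico 1 k, ee l x))) := by
      intro k hk
      simp only [Finset.mem_Icc] at hk
      -- tail product
      have htail : (∏ l ∈ Ico k n, bb l * tt l x) * (bb n * tt n x)
          = (∏ l ∈ Icc k n, ee l x)⁻¹ := by
        calc (∏ l ∈ Ico k n, bb l * tt l x) * (bb n * tt n x)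
            = ∏ l ∈ Ico k (n+1), bb l * tt l x :=
              (Finset.prod_Ico_succ_top hk.2 _).symm
          _ = ∏ l ∈ Icc k n, bb l * tt l x := by rw [Finset.Ico_add_one_right_eq_Icc]
          _ = ∏ l ∈ Icc k n, (ee l x)⁻¹ :=
              Finset.prod_congr rfl (fun l _ => bb_mul_tt hx l)
          _ = (∏ l ∈ Icc k n, ee l x)⁻¹ := by rw [Finset.prod_inv_distrib]
      -- full product
      have hBB : BBf n x = 1 + (pp n x)⁻¹ := by
        unfold BBf pp
        rw [Finset.prod_congr rfl (fun l (_ : l ∈ Icc 1 n) => (bb_mul_tt hx l)),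
          Finset.prod_inv_distrib]
      have hsplit := pp_split (Finset.mem_Icc.mpr hk) x
      have htailne : (∏ l ∈ Icc k n, ee l x) ≠ 0 :=
        ne_of_gt (Finset.prod_pos (fun l _ => ee_pos hx l))
      have hheadne : (∏ l ∈ Ico 1 k, ee l x) ≠ 0 :=
        ne_of_gt (Finset.prod_pos (fun l _ => ee_pos hx l))
      have hbk := ne_of_gt (bb_pos k)
      rw [mul_assoc (BBf n x * ((pp n x * s1 n x)⁻¹ * (pp n x * s1 n x)⁻¹)), htail, hBB]
      unfold vv1
      rw [hsplit]
      field_simp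
      ring
    rw [Finset.sum_congr rfl hterm]
    have hfac : ∀ k ∈ Icc 1 n,
        cc n * ((1 + pp n x) * ((bb k)⁻¹ * (x^2 * ∏ l ∈ Ico 1 k, ee l x)))
        = (cc n * (1 + pp n x) * x^2) * ((bb k)⁻¹ * ∏ l ∈ Ico 1 k, ee l x) := by
      intro k _; ring
    rw [Finset.sum_congr rfl hfac, ← Finset.mul_sum]
    have htel := telescope n x
    linear_combination (cc n * (1 + pp n x)) * htel
  rw [VnEq, hkey]
  ring

/-! ### derivatives of Vn -/

noncomputable def vv2 (n : ℕ) (x : ℝ) : ℝ :=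
  (-4*cc n) * ((pp n x)^2 * (s1 n x - 4*x^2*(s1 n x)^2 + 2*x^2*(s2 n x)))

lemma isOpen_II : IsOpen II := isOpen_Ioo

lemma hasDerivAt_Vn {n : ℕ} {x : ℝ} (hx : x ∈ II) :
    HasDerivAt (Vn n) (vv1 n x) x := by
  have hfun : Vn n = fun y => cc n * (pp n y)^2 := funext (VnEq n)
  rw [hfun]
  have := ((hasDerivAt_pp hx n).fun_pow 2).const_mul (cc n)
  convert! this using 1
  unfold vv1
  push_cast
  ring

lemma hasDerivAt_vv1 {n : ℕ} {x : ℝ} (hx : x ∈ II) :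
    HasDerivAt (vv1 n) (vv2 n x) x := by
  have hinner := (hasDerivAt_id x).fun_mul (((hasDerivAt_pp hx n).fun_pow 2).fun_mul (hasDerivAt_s1 hx n))
  have := hinner.const_mul (-4*cc n)
  have hshape : vv1 n = fun y => (-4*cc n) * (id y * ((pp n y)^2 * s1 n y)) := by
    funext y; simp [vv1, id_eq]
  rw [hshape]
  convert! this using 1
  unfold vv2
  simp only [id_eq]
  push_cast
  ring

lemma hasDerivAt_vv2 {n : ℕ} {x : ℝ} (hx : x ∈ II) :
    ∃ w, HasDerivAt (vv2 n) w x := by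
  have hA : HasDerivAt (fun y : ℝ => 4*y^2*(s1 n y)^2)
      ((4*(2*x^1)) * (s1 n x)^2 + (4*x^2) * (2*(s1 n x)^1*(2*x*s2 n x))) x := by
    have h1 : HasDerivAt (fun y : ℝ => 4*y^2) (4*(2*x^1)) x := by
      have := (hasDerivAt_pow 2 x).const_mul (4:ℝ)
      convert! this using 1
      all_goals (push_cast; ring)
    have h2 : HasDerivAt (fun y => (s1 n y)^2) (2*(s1 n x)^1*(2*x*s2 n x)) x := by
      have := (hasDerivAt_s1 hx n).fun_pow 2
      convert! this using 1
      all_goals (push_cast; ring)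
    exact h1.fun_mul h2
  have hB : HasDerivAt (fun y : ℝ => 2*y^2*(s2 n y))
      ((2*(2*x^1)) * s2 n x + (2*x^2) * (4*x*s3 n x)) x := by
    have h1 : HasDerivAt (fun y : ℝ => 2*y^2) (2*(2*x^1)) x := by
      have := (hasDerivAt_pow 2 x).const_mul (2:ℝ)
      convert! this using 1
      all_goals (push_cast; ring)
    exact h1.fun_mul (hasDerivAt_s2 hx n)
  have hsum := ((hasDerivAt_s1 hx n).fun_sub hA).fun_add hB
  have hmul := ((hasDerivAt_pp hx n).fun_pow 2).fun_mul hsum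
  have := hmul.const_mul (-4*cc n)
  exact ⟨_, this⟩

end Stmt5Aux

open Stmt5Aux in
theorem stmt5 (n : ℕ) (hn : 1 ≤ n) (x : ℝ) (hx : x ∈ Set.Ioo (-(1 / 2) : ℝ) (1 / 2)) :
    0 ≤ calV n x ∧ (x ≠ 0 → 0 < calV n x) := by
  have hx' : x ∈ II := hx
  -- first derivative of Vn on II
  have hd1 : ∀ y ∈ II, deriv (Vn n) y = vv1 n y := fun y hy => (hasDerivAt_Vn hy).deriv
  have hnhds : ∀ y, y ∈ II → II ∈ nhds y := fun y hy => isOpen_II.mem_nhds hy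
  have hev1 : ∀ y ∈ II, deriv (Vn n) =ᶠ[nhds y] vv1 n := fun y hy =>
    Filter.eventuallyEq_of_mem (hnhds y hy) (fun z hz => hd1 z hz)
  have hd2 : ∀ y ∈ II, deriv (deriv (Vn n)) y = vv2 n y := by
    intro y hy
    rw [(hev1 y hy).deriv_eq]
    exact (hasDerivAt_vv1 hy).deriv
  have hev2 : deriv (deriv (Vn n)) =ᶠ[nhds x] vv2 n :=
    Filter.eventuallyEq_of_mem (hnhds x hx') (fun z hz => hd2 z hz)
  obtain ⟨w3, hw3⟩ := hasDerivAt_vv2 (n := n) hx'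
  have hd3 : deriv (deriv (deriv (Vn n))) x = w3 := by
    rw [hev2.deriv_eq]
    exact hw3.deriv
  -- Good data for NN
  obtain ⟨hN, f₂N, ⟨HD1, HD2, HNpos, HNh, HNf2⟩, HNf2pos⟩ := goodP_NN hn
  -- E2 : differentiating E1
  have hE2 : ∀ y ∈ II, vv1 n y
      = -((y*hN y) * (vv1 n y)^2 + NN n y * (2*vv1 n y*vv2 n y)) := by
    intro y hy
    have hR : HasDerivAt (fun z => cc n - NN n z * (vv1 n z)^2)
        (-((y*hN y) * (vv1 n y)^2 + NN n y * (2*vv1 n y*vv2 n y))) y := by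
      have h1 : HasDerivAt (fun z => NN n z * (vv1 n z)^2)
          ((y*hN y) * (vv1 n y)^2 + NN n y * (2*vv1 n y*vv2 n y)) y := by
        have := (HD1 y hy).fun_mul ((hasDerivAt_vv1 (n := n) hy).fun_pow 2)
        convert! this using 1
        all_goals (push_cast; ring)
      have := h1.const_sub (cc n)
      convert this using 1
      all_goals ring
    have hevE1 : Vn n =ᶠ[nhds y] (fun z => cc n - NN n z * (vv1 n z)^2) :=
      Filter.eventuallyEq_of_mem (hnhds y hy) (fun z hz => E1 hn hz)
    have hL : HasDerivAt (Vn n)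
        (-((y*hN y) * (vv1 n y)^2 + NN n y * (2*vv1 n y*vv2 n y))) y :=
      hR.congr_of_eventuallyEq hevE1
    exact (hasDerivAt_Vn hy).unique hL
  -- E3 : differentiating E2
  have hE3 : vv2 n x = -((f₂N x*(vv1 n x)^2 + (x*hN x)*(2*vv1 n x*vv2 n x))
      + ((2*(x*hN x)*vv1 n x + 2*NN n x*vv2 n x)*vv2 n x + 2*NN n x*vv1 n x*w3)) := by
    have hA : HasDerivAt (fun z => (z*hN z) * (vv1 n z)^2)
        (f₂N x*(vv1 n x)^2 + (x*hN x)*(2*vv1 n x*vv2 n x)) x := by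
      have := (HD2 x hx').fun_mul ((hasDerivAt_vv1 (n := n) hx').fun_pow 2)
      convert! this using 1
      all_goals (push_cast; ring)
    have hB : HasDerivAt (fun z => 2*NN n z*vv1 n z*vv2 n z)
        ((2*(x*hN x)*vv1 n x + 2*NN n x*vv2 n x)*vv2 n x + 2*NN n x*vv1 n x*w3) x := by
      have h1 : HasDerivAt (fun z => 2*NN n z*vv1 n z)
          (2*(x*hN x)*vv1 n x + 2*NN n x*vv2 n x) x := by
        have := ((HD1 x hx').const_mul (2:ℝ)).fun_mul (hasDerivAt_vv1 (n := n) hx')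
        convert this using 1
        all_goals ring
      exact h1.fun_mul hw3
    have hR := (hA.fun_add hB).fun_neg
    have hevE2 : vv1 n =ᶠ[nhds x] (fun z =>
        -((z*hN z) * (vv1 n z)^2 + NN n z * (2*vv1 n z*vv2 n z))) :=
      Filter.eventuallyEq_of_mem (hnhds x hx') (fun z hz => hE2 z hz)
    have hshape : (fun z => -((z*hN z) * (vv1 n z)^2 + 2*NN n z*vv1 n z*vv2 n z))
        = (fun z => -((z*hN z) * (vv1 n z)^2 + NN n z * (2*vv1 n z*vv2 n z))) := by
      funext z; ring
    rw [hshape] at hR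
    have hL := hR.congr_of_eventuallyEq hevE2
    exact (hasDerivAt_vv1 hx').unique hL
  -- the master identity
  have hVc : Vn n x - Vn n 0 = -(NN n x*(vv1 n x)^2) := by
    rw [Vn0]
    have := E1 hn hx'
    linarith
  have hcal : calV n x = f₂N x * (vv1 n x)^4 := by
    unfold calV
    rw [hd1 x hx', hd2 x hx', hd3, hVc]
    have e2 := hE2 x hx'
    linear_combination (4*vv1 n x*vv2 n x) * e2 - (vv1 n x)^2 * hE3
  constructor
  · rw [hcal]
    exact mul_nonneg (HNf2pos x hx').le (by positivity)
  · intro hx0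
    rw [hcal]
    have hvne : vv1 n x ≠ 0 := by
      unfold vv1
      have h1 := pp_pos hx' n
      have h2 := s1_pos hx' hn
      have h3 := cc_pos n
      have hne1 : x * ((pp n x)^2 * s1 n x) ≠ 0 := by
        have h4 : (0:ℝ) < (pp n x)^2 * s1 n x := by positivity
        exact mul_ne_zero hx0 (ne_of_gt h4)
      have hne2 : (-4*cc n) ≠ 0 := by
        have : (0:ℝ) < 4 * cc n := by positivity
        intro hcontra
        linarith [hcontra]
      exact mul_ne_zero hne2 hne1
    have h40 : (vv1 n x)^4 ≠ 0 := pow_ne_zero 4 hvne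
    have h4n : 0 ≤ (vv1 n x)^4 := by positivity
    exact mul_pos (HNf2pos x hx') (lt_of_le_of_ne h4n (Ne.symm h40))
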